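/- Let R be a commutative ℚ-algebra with a derivation δ, let n ≥ 0, and let f_0, …, f_n ∈ R. Define a_0 = −1, a_k = Σ_{i=0}^{k−1} a_i f_{n−k+i+1} for k ≥ 1, and p_k = Σ_{i=1}^{k} i·f_{n−i+1}·a_{k−i} for k ≥ 1 (with f of negative index equal to 0). Suppose an operator Y : R → R satisfies Y(f_n) = f_n, Y^{m+1}(f_n) = (m+1)·f_{n−m} + Σ_{i=0}^{m−1} f_{n−i}·Y^{m−i}(f_n) for all m ≥ 1. Then Y^k(f_n) = −p_k for every k ≥ 1. -/

import Mathlib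

/-- With `a_0 = -1`, `a_k = ∑_{i=0}^{k-1} a_i f_{n-k+i+1}` and
`p_k = ∑_{i=1}^k i·f_{n-i+1}·a_{k-i}` (with `f` of negative index equal to `0`), any operator
`Y : R → R` satisfying `Y(f_n) = f_n` and
`Y^{m+1}(f_n) = (m+1)·f_{n-m} + ∑_{i=0}^{m-1} f_{n-i}·Y^{m-i}(f_n)` for all `m ≥ 1`,
satisfies `Y^k(f_n) = -p_k` for every `k ≥ 1`. -/
theorem stmt17 {R : Type*} [CommRing R] [Algebra ℚ R] (δ : Derivation ℚ R R)
    (n : ℕ) (f : ℤ → R) (hfneg : ∀ i : ℤ, i < 0 → f i = 0)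
    (a : ℕ → R) (ha0 : a 0 = -1)
    (ha : ∀ k : ℕ, 1 ≤ k →
      a k = ∑ i ∈ Finset.range k, a i * f ((n : ℤ) - (k : ℤ) + (i : ℤ) + 1))
    (p : ℕ → R)
    (hp : ∀ k : ℕ, 1 ≤ k →
      p k = ∑ i ∈ Finset.Icc 1 k, (i : R) * f ((n : ℤ) - (i : ℤ) + 1) * a (k - i))
    (Y : R → R)
    (hY1 : Y (f (n : ℤ)) = f (n : ℤ))
    (hY : ∀ m : ℕ, 1 ≤ m →
      Y^[m + 1] (f (n : ℤ)) = ((m : R) + 1) * f ((n : ℤ) - (m : ℤ))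
        + ∑ i ∈ Finset.range m, f ((n : ℤ) - (i : ℤ)) * Y^[m - i] (f (n : ℤ))) :
    ∀ k : ℕ, 1 ≤ k → Y^[k] (f (n : ℤ)) = -p k := by
  intro k
  induction k using Nat.strong_induction_on with
  | _ k IH =>
  intro hk
  match k, hk with
  | 1, _ =>
    rw [hp 1 le_rfl]
    simp [hY1, ha0]
  | (m+2), _ =>
    have hm1 : 1 ≤ m + 1 := Nat.le_add_left 1 m
    have hstep := hY (m+1) hm1
    rw [hstep]
    have hIHsum : ∑ i ∈ Finset.range (m+1),
        f ((n:ℤ) - (i:ℤ)) * Y^[(m+1) - i] (f (n:ℤ))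
        = ∑ i ∈ Finset.range (m+1), -(f ((n:ℤ) - (i:ℤ)) * p ((m+1) - i)) := by
      apply Finset.sum_congr rfl
      intro i hi
      simp only [Finset.mem_range] at hi
      rw [IH ((m+1) - i) (by omega) (by omega)]
      ring
    rw [hIHsum]
    have key : ∑ i ∈ Finset.range (m+1), f ((n:ℤ) - (i:ℤ)) * p ((m+1) - i)
        = ∑ j ∈ Finset.Icc 1 (m+1), (j:R) * f ((n:ℤ) - (j:ℤ) + 1) * a (m+2-j) := by
      have h1 : ∀ i ∈ Finset.range (m+1), f ((n:ℤ) - (i:ℤ)) * p ((m+1) - i)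
          = ∑ j ∈ Finset.Icc 1 ((m+1)-i),
              f ((n:ℤ) - (i:ℤ)) * ((j:R) * f ((n:ℤ) - (j:ℤ) + 1) * a ((m+1)-i-j)) := by
        intro i hi
        simp only [Finset.mem_range] at hi
        rw [hp ((m+1)-i) (by omega), Finset.mul_sum]
      rw [Finset.sum_congr rfl h1]
      rw [Finset.sum_comm' (t' := Finset.Icc 1 (m+1))
        (s' := fun j => Finset.range (m+2-j))
        (by intro i j; simp only [Finset.mem_range, Finset.mem_Icc]; omega)]
      apply Finset.sum_congr rfl
      intro j hj
      simp only [Finset.mem_Icc] at hj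
      rw [ha (m+2-j) (by omega), Finset.mul_sum,
        ← Finset.sum_range_reflect
          (fun i => f ((n:ℤ) - (i:ℤ)) * ((j:R) * f ((n:ℤ) - (j:ℤ) + 1) * a ((m+1)-i-j)))
          (m+2-j)]
      apply Finset.sum_congr rfl
      intro i hi
      simp only [Finset.mem_range] at hi
      have e1 : (n:ℤ) - ((m+2-j-1-i : ℕ):ℤ) = (n:ℤ) - ((m+2-j : ℕ):ℤ) + (i:ℤ) + 1 := by
        omega
      have e2 : (m+1) - (m+2-j-1-i) - j = i := by omega
      rw [e1, e2]
      ring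
    rw [Finset.sum_neg_distrib, key, hp (m+2) (by omega),
      Finset.sum_Icc_succ_top (by omega :  1 ≤ m + 1 + 1)]
    have e3 : (n:ℤ) - ((m+2 : ℕ):ℤ) + 1 = (n:ℤ) - ((m+1 : ℕ):ℤ) := by push_cast; ring
    have e4 : (m+2) - (m+2) = 0 := by omega
    rw [e3, e4, ha0]
    set S := ∑ j ∈ Finset.Icc 1 (m+1), (j:R) * f ((n:ℤ) - (j:ℤ) + 1) * a (m+2-j) with hS
    push_cast
    ring
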